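/- Let G be a cofinitary group, r ∈ 2^ω, T ∈ I_i(G)^+, t ∈ T, and (s,E) a condition of Z†_G(r). Then there exist a condition (s',E) of Z†_G(r) with (s',E) ≤ (s,E), an element t' ∈ T with t ⊆ t', and k ∈ dom(t') \ dom(t) such that t'(k) = s'(k). -/

import Mathlib

noncomputable section

/-- Permutations of the natural numbers (elements of `S_∞`). -/
abbrev Perm' := Equiv.Perm ℕ

/-- A letter of a word over `G ∪ {x, x⁻¹}`: either a group element (of `S_∞`),
or `Sum.inr true` standing for `x`, or `Sum.inr false` standing for `x⁻¹`. -/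
abbrev Letter := Perm' ⊕ Bool

/-- A word is a list of letters, written left to right
(the leftmost letter is applied last). -/
abbrev Word := List Letter

/-- A subgroup of `S_∞` is cofinitary if every non-identity element
has only finitely many fixed points. -/
def Cofinitary (G : Subgroup Perm') : Prop :=
  ∀ g ∈ G, g ≠ 1 → {n : ℕ | g n = n}.Finite

/-- A set of pairs is a partial injection (functional and injective). -/
def PartInj (s : Set (ℕ × ℕ)) : Prop :=
  (∀ ⦃a b c⦄, (a, b) ∈ s → (a, c) ∈ s → b = c) ∧
  (∀ ⦃a b c⦄, (a, c) ∈ s → (b, c) ∈ s → a = b)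

/-- Domain of a partial injection given as a set of pairs. -/
def pdom (s : Set (ℕ × ℕ)) : Set ℕ := Prod.fst '' s

/-- Range of a partial injection given as a set of pairs. -/
def pran (s : Set (ℕ × ℕ)) : Set ℕ := Prod.snd '' s

/-- The relation given by substituting the partial injection `s` for `x`
(and `s⁻¹` for `x⁻¹`) in a single letter. -/
def letterRel (s : Set (ℕ × ℕ)) : Letter → ℕ → ℕ → Prop
  | Sum.inl g => fun a b => g a = b
  | Sum.inr true => fun a b => (a, b) ∈ s
  | Sum.inr false => fun a b => (b, a) ∈ s

/-- The relation `w[s]`: evaluation of a word at the partial injection `s`,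
composing the letter relations (rightmost letter applied first). -/
def wordRel (s : Set (ℕ × ℕ)) : Word → ℕ → ℕ → Prop
  | [] => fun a b => a = b
  | l :: w => fun a b => ∃ c, wordRel s w a c ∧ letterRel s l c b

/-- `fix(w[s])`, the set of fixed points of the partial injection `w[s]`. -/
def wordFix (s : Set (ℕ × ℕ)) (w : Word) : Set ℕ := {n | wordRel s w n n}

/-- The word `x^k` for an integer `k` (for `k < 0`, `|k|` copies of `x⁻¹`). -/
def xpow (k : ℤ) : Word :=
  if 0 ≤ k then List.replicate k.toNat (Sum.inr true : Letter)
  else List.replicate (-k).toNat (Sum.inr false : Letter)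

/-- The block `g x^k` as a word. -/
def blockWord (p : Perm' × ℤ) : Word := Sum.inl p.1 :: xpow p.2

/-- `w` is a nice word (member of `W*_G`): `w = x^{k₀}` with `k₀ > 0`, or
`w = g_l x^{k_l} ⋯ g₁ x^{k₁} g₀ x^{k₀}` with `k₀ > 0`, all `k_i ≠ 0` and all
`g_i ∈ G \ {id}`. -/
def IsNice (G : Subgroup Perm') (w : Word) : Prop :=
  (∃ k : ℕ, 0 < k ∧ w = xpow (k : ℤ)) ∨
  (∃ bs : List (Perm' × ℤ), bs ≠ [] ∧
    (∀ p ∈ bs, p.1 ∈ G ∧ p.1 ≠ 1 ∧ p.2 ≠ 0) ∧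
    (∃ p, bs.getLast? = some p ∧ 0 < p.2) ∧
    w = (bs.map blockWord).flatten)

/-- The number of occurrences of `x` or `x⁻¹` in a word. -/
def xOccurrences (w : Word) : ℕ := w.countP (fun l => l.isRight)

/-- `w ∈ W¹_G`: a nice word with exactly one occurrence of `x` or `x⁻¹`. -/
def IsNiceOne (G : Subgroup Perm') (w : Word) : Prop :=
  IsNice G w ∧ xOccurrences w = 1

/-- `(s, E)` is a condition of Zhang's forcing `Z_G`: `s` is a finite partial
injection and `E` a finite set of nice words. -/
def ZCond (G : Subgroup Perm') (s : Set (ℕ × ℕ)) (E : Set Word) : Prop :=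
  s.Finite ∧ PartInj s ∧ E.Finite ∧ ∀ w ∈ E, IsNice G w

/-- `(t, F) ≤ (s, E)` in Zhang's forcing: `s ⊆ t`, `E ⊆ F`, and
`fix(w[t]) = fix(w[s])` for every `w ∈ E`. -/
def ZLe (t : Set (ℕ × ℕ)) (F : Set Word) (s : Set (ℕ × ℕ)) (E : Set Word) : Prop :=
  s ⊆ t ∧ E ⊆ F ∧ ∀ w ∈ E, wordFix t w = wordFix s w

/-- An injective tree: a nonempty set of finite sequences closed under initial
segments, all of whose elements are injective sequences. -/
def IsInjTree (T : Set (List ℕ)) : Prop :=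
  T.Nonempty ∧ (∀ t ∈ T, ∀ s : List ℕ, s <+: t → s ∈ T) ∧ ∀ t ∈ T, t.Nodup

/-- `T ∈ I_i(P)⁺`: an injective tree such that for every `s ∈ T` and every
finite `P₀ ⊆ P` there are `t ∈ T` extending `s` and `k ∈ dom(t) \ dom(s)` with
`t(k) ≠ f(k)` for all `f ∈ P₀`. -/
def TreePos (P : Set Perm') (T : Set (List ℕ)) : Prop :=
  IsInjTree T ∧
  ∀ s ∈ T, ∀ P₀ ⊆ P, P₀.Finite →
    ∃ t ∈ T, s <+: t ∧ ∃ k, s.length ≤ k ∧ k < t.length ∧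
      ∀ f ∈ P₀, t.getD k 0 ≠ f k

/-- A set `O` is closed under a relation `R` and its inverse. -/
def RelClosed (R : ℕ → ℕ → Prop) (O : Set ℕ) : Prop :=
  ∀ a b, R a b → (a ∈ O ↔ b ∈ O)

/-- The orbit of `n` under the (partial injective) relation `R`: the smallest
set containing `n` closed under applications of `R` and `R⁻¹`. -/
def relOrbit (R : ℕ → ℕ → Prop) (n : ℕ) : Set ℕ :=
  ⋂₀ {O : Set ℕ | n ∈ O ∧ RelClosed R O}

/-- The set of all orbits of the relation `R`. -/
def relOrbits (R : ℕ → ℕ → Prop) : Set (Set ℕ) := {O | ∃ n, O = relOrbit R n}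

/-- Domain of a relation. -/
def relDom (R : ℕ → ℕ → Prop) : Set ℕ := {a | ∃ b, R a b}

/-- Range of a relation. -/
def relRan (R : ℕ → ℕ → Prop) : Set ℕ := {b | ∃ a, R a b}

/-- The set of closed orbits of `R`: those orbits contained in `dom ∩ ran`. -/
def relClosedOrbits (R : ℕ → ℕ → Prop) : Set (Set ℕ) :=
  {O ∈ relOrbits R | O ⊆ relDom R ∩ relRan R}

/-- The relation of a partial injection given as a set of pairs. -/
def sRel (s : Set (ℕ × ℕ)) : ℕ → ℕ → Prop := fun a b => (a, b) ∈ s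

/-- The relation (graph) of a permutation of `ℕ`. -/
def permRel (f : Perm') : ℕ → ℕ → Prop := fun a b => f a = b

/-- A partial injection `s` is nice: every closed orbit has its minimum below
the minimum of the complement of the union of all closed orbits. -/
def NiceInj (s : Set (ℕ × ℕ)) : Prop :=
  ∀ O ∈ relClosedOrbits (sRel s),
    sInf O < sInf {n : ℕ | n ∉ ⋃₀ relClosedOrbits (sRel s)}

/-- The position of a closed orbit `O` of `s` in the well-order of closed
orbits by their minima. -/
def orbitIndex (s : Set (ℕ × ℕ)) (O : Set ℕ) : ℕ :=
  {P ∈ relClosedOrbits (sRel s) | sInf P < sInf O}.ncard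

/-- `s` codes `r`, i.e. `o_s ⊆ r`: the `n`-th closed orbit (in the well-order
by minima) has cardinality congruent to `r(n)` mod 2. -/
def CodesReal (s : Set (ℕ × ℕ)) (r : ℕ → Fin 2) : Prop :=
  ∀ O ∈ relClosedOrbits (sRel s), O.ncard % 2 = (r (orbitIndex s O) : ℕ)

/-- `(s, E)` is a condition of `Z_G(r)`. -/
def ZrCond (G : Subgroup Perm') (r : ℕ → Fin 2)
    (s : Set (ℕ × ℕ)) (E : Set Word) : Prop :=
  ZCond G s E ∧ NiceInj s ∧ CodesReal s r

/-- The `n`-th prime. -/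
def pPrime (n : ℕ) : ℕ := Nat.nth Nat.Prime n

/-- The orbit-coding function `o†`: `o†(n)` is the number of closed orbits of
`R` of cardinality `p_n`, modulo 2. -/
def odag (R : ℕ → ℕ → Prop) (n : ℕ) : ℕ :=
  {O ∈ relClosedOrbits R | O.ncard = pPrime n}.ncard % 2

/-- `v^k`: the word `v` concatenated `k` times. -/
def wpow (v : Word) (k : ℕ) : Word := (List.replicate k v).flatten

/-- `w ∈ W†_G`: a nice word that is indecomposable, i.e. not of the form `v^k`
for a nice word `v` and `k > 1`. -/
def Indecomposable (G : Subgroup Perm') (w : Word) : Prop :=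
  IsNice G w ∧ ¬∃ v : Word, IsNice G v ∧ ∃ k : ℕ, 1 < k ∧ w = wpow v k

/-- The inverse of a letter. -/
def letterInv : Letter → Letter
  | Sum.inl g => Sum.inl g⁻¹
  | Sum.inr b => Sum.inr (!b)

/-- The inverse of a word. -/
def wordInv (w : Word) : Word := (w.map letterInv).reverse

/-- `E` is closed under cyclic permutations and inverses thereof within `W*_G`. -/
def CyclClosed (G : Subgroup Perm') (E : Set Word) : Prop :=
  ∀ w ∈ E, ∀ w₀ w₁ : Word, w = w₀ ++ w₁ →
    (IsNice G (w₁ ++ w₀) → w₁ ++ w₀ ∈ E) ∧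
    (IsNice G (wordInv (w₁ ++ w₀)) → wordInv (w₁ ++ w₀) ∈ E)

/-- `(s, E)` is a condition of `Z†_G(r)`: a Zhang condition such that `E` is
closed under cyclic permutations and inverses thereof in `W*_G`, and whenever
`w = v^k ∈ E` with `v ∈ W†_G` then `v^l ∈ E` for all `0 < l ≤ k` and `o†_{v[s]}`
codes `r` up to `n` for every `n` with `p_n ≤ k`. -/
def ZdagCond (G : Subgroup Perm') (r : ℕ → Fin 2)
    (s : Set (ℕ × ℕ)) (E : Set Word) : Prop :=
  ZCond G s E ∧ CyclClosed G E ∧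
  ∀ w ∈ E, ∀ v : Word, ∀ k : ℕ, Indecomposable G v → w = wpow v k →
    (∀ l : ℕ, 0 < l → l ≤ k → wpow v l ∈ E) ∧
    (∀ n : ℕ, pPrime n ≤ k → ∀ i ≤ n, odag (wordRel s v) i = (r i : ℕ))

/-- Substituting the permutation `f` for `x` in a letter. -/
def letterPerm (f : Perm') : Letter → Perm'
  | Sum.inl g => g
  | Sum.inr true => f
  | Sum.inr false => f⁻¹

/-- `w[f]`: evaluation of a word at the permutation `f`. -/
def wordPerm (f : Perm') (w : Word) : Perm' := (w.map (letterPerm f)).prod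

/-- Two functions are eventually different. -/
def EvDiff (f g : ℕ → ℕ) : Prop := {k : ℕ | f k = g k}.Finite

/-- A set of permutations is an eventually different family. -/
def EDFamily (P : Set Perm') : Prop :=
  ∀ f ∈ P, ∀ g ∈ P, f ≠ g → EvDiff f g



/-! ### Auxiliary development for statement15 -/

namespace Aux15

open List

@[simp] lemma wordRel_nil (s : Set (ℕ × ℕ)) (a b : ℕ) : wordRel s [] a b ↔ a = b := Iff.rfl

@[simp] lemma wordRel_cons (s : Set (ℕ × ℕ)) (l : Letter) (w : Word) (a b : ℕ) :
    wordRel s (l :: w) a b ↔ ∃ c, wordRel s w a c ∧ letterRel s l c b := Iff.rfl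

@[simp] lemma letterRel_inl (s : Set (ℕ × ℕ)) (g : Perm') (a b : ℕ) :
    letterRel s (Sum.inl g) a b ↔ g a = b := Iff.rfl

@[simp] lemma letterRel_x (s : Set (ℕ × ℕ)) (a b : ℕ) :
    letterRel s (Sum.inr true) a b ↔ (a, b) ∈ s := Iff.rfl

@[simp] lemma letterRel_xinv (s : Set (ℕ × ℕ)) (a b : ℕ) :
    letterRel s (Sum.inr false) a b ↔ (b, a) ∈ s := Iff.rfl

lemma wordRel_append (s : Set (ℕ × ℕ)) (u v : Word) (a b : ℕ) :
    wordRel s (u ++ v) a b ↔ ∃ c, wordRel s v a c ∧ wordRel s u c b := by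
  induction u generalizing b with
  | nil => simp
  | cons l u ih =>
    simp only [cons_append, wordRel_cons]
    constructor
    · rintro ⟨d, hd, hl⟩
      obtain ⟨c, hc, hcd⟩ := (ih d).mp hd
      exact ⟨c, hc, d, hcd, hl⟩
    · rintro ⟨c, hc, d, hd, hl⟩
      exact ⟨d, (ih d).mpr ⟨c, hc, hd⟩, hl⟩

lemma letterRel_mono {s t : Set (ℕ × ℕ)} (h : s ⊆ t) {l : Letter} {a b : ℕ}
    (hl : letterRel s l a b) : letterRel t l a b := by
  cases l with
  | inl g => exact hl
  | inr br => cases br <;> exact h hl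

lemma wordRel_mono {s t : Set (ℕ × ℕ)} (h : s ⊆ t) {w : Word} {a b : ℕ}
    (hw : wordRel s w a b) : wordRel t w a b := by
  induction w generalizing b with
  | nil => exact hw
  | cons l w ih =>
    obtain ⟨c, hc, hl⟩ := hw
    exact ⟨c, ih hc, letterRel_mono h hl⟩

lemma letterRel_func {s : Set (ℕ × ℕ)} (hs : PartInj s) {l : Letter} {a b b' : ℕ}
    (h1 : letterRel s l a b) (h2 : letterRel s l a b') : b = b' := by
  cases l with
  | inl g => exact h1 ▸ h2 ▸ rfl
  | inr br =>
    cases br with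
    | false => exact hs.2 h1 h2
    | true => exact hs.1 h1 h2

lemma letterRel_inj {s : Set (ℕ × ℕ)} (hs : PartInj s) {l : Letter} {a a' b : ℕ}
    (h1 : letterRel s l a b) (h2 : letterRel s l a' b) : a = a' := by
  cases l with
  | inl g => exact g.injective (h1.trans h2.symm)
  | inr br =>
    cases br with
    | false => exact hs.1 h1 h2
    | true => exact hs.2 h1 h2

lemma wordRel_func {s : Set (ℕ × ℕ)} (hs : PartInj s) {w : Word} {a b b' : ℕ}
    (h1 : wordRel s w a b) (h2 : wordRel s w a b') : b = b' := by
  induction w generalizing b b' with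
  | nil => exact h1.symm.trans h2
  | cons l w ih =>
    obtain ⟨c, hc, hl⟩ := h1
    obtain ⟨c', hc', hl'⟩ := h2
    obtain rfl := ih hc hc'
    exact letterRel_func hs hl hl'

lemma wordRel_inj {s : Set (ℕ × ℕ)} (hs : PartInj s) {w : Word} {a a' b : ℕ}
    (h1 : wordRel s w a b) (h2 : wordRel s w a' b) : a = a' := by
  induction w generalizing b with
  | nil => exact h1.trans h2.symm
  | cons l w ih =>
    obtain ⟨c, hc, hl⟩ := h1
    obtain ⟨c', hc', hl'⟩ := h2
    obtain rfl := letterRel_inj hs hl hl'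
    exact ih hc hc'

lemma pdom_finite {s : Set (ℕ × ℕ)} (h : s.Finite) : (pdom s).Finite := h.image _
lemma pran_finite {s : Set (ℕ × ℕ)} (h : s.Finite) : (pran s).Finite := h.image _

lemma relRan_wordRel_finite {s : Set (ℕ × ℕ)} (hfin : s.Finite) :
    ∀ (u : Word), (∃ br : Bool, Sum.inr br ∈ u) → (relRan (wordRel s u)).Finite := by
  intro u
  induction u with
  | nil => rintro ⟨br, h⟩; simp at h
  | cons l u ih =>
    rintro ⟨br, hbr⟩
    cases l with
    | inl g =>
      have hu : ∃ br : Bool, Sum.inr br ∈ u := by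
        rcases mem_cons.mp hbr with h | h
        · exact absurd h (by simp)
        · exact ⟨br, h⟩
      have hsub : relRan (wordRel s (Sum.inl g :: u)) ⊆ (fun n => g n) '' relRan (wordRel s u) := by
        rintro b ⟨a, c, hc, hl⟩
        exact ⟨c, ⟨a, hc⟩, hl⟩
      exact ((ih hu).image _).subset hsub
    | inr br' =>
      cases br'
      · refine ((pdom_finite hfin)).subset ?_
        rintro b ⟨a, c, _, hl⟩
        exact ⟨(b, c), hl, rfl⟩
      · refine ((pran_finite hfin)).subset ?_
        rintro b ⟨a, c, _, hl⟩
        exact ⟨(c, b), hl, rfl⟩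

lemma preimage_wordRel_finite {s : Set (ℕ × ℕ)} (hs : PartInj s) (u : Word) {F : Set ℕ}
    (hF : F.Finite) : {a | ∃ c, wordRel s u a c ∧ c ∈ F}.Finite := by
  have hsub : {a | ∃ c, wordRel s u a c ∧ c ∈ F} ⊆ ⋃ c ∈ F, {a | wordRel s u a c} := by
    rintro a ⟨c, h1, h2⟩
    exact Set.mem_biUnion h2 h1
  refine (Set.Finite.biUnion hF fun c _ => ?_).subset hsub
  exact Set.Subsingleton.finite fun a ha a' ha' => wordRel_inj hs ha ha'

end Aux15

namespace Aux15

lemma mem_relOrbit_self (R : ℕ → ℕ → Prop) (n : ℕ) : n ∈ relOrbit R n :=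
  Set.mem_sInter.mpr fun _ hO => hO.1

lemma relClosed_relOrbit (R : ℕ → ℕ → Prop) (n : ℕ) : RelClosed R (relOrbit R n) := by
  intro a b hab
  simp only [relOrbit, Set.mem_sInter]
  constructor
  · intro h O hO
    exact (hO.2 a b hab).mp (h O hO)
  · intro h O hO
    exact (hO.2 a b hab).mpr (h O hO)

lemma relOrbit_subset {R : ℕ → ℕ → Prop} {n : ℕ} {O : Set ℕ} (h1 : n ∈ O)
    (h2 : RelClosed R O) : relOrbit R n ⊆ O :=
  Set.sInter_subset_of_mem ⟨h1, h2⟩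

lemma relOrbit_eq_of_rel {R : ℕ → ℕ → Prop} {a b : ℕ} (hab : R a b) :
    relOrbit R a = relOrbit R b := by
  have h1 : b ∈ relOrbit R a := (relClosed_relOrbit R a a b hab).mp (mem_relOrbit_self R a)
  have h2 : a ∈ relOrbit R b := (relClosed_relOrbit R b a b hab).mpr (mem_relOrbit_self R b)
  exact subset_antisymm (relOrbit_subset h2 (relClosed_relOrbit R b))
    (relOrbit_subset h1 (relClosed_relOrbit R a))

lemma relOrbit_eq_of_mem {R : ℕ → ℕ → Prop} {n m : ℕ} (hm : m ∈ relOrbit R n) :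
    relOrbit R n = relOrbit R m := by
  have hA : RelClosed R {p | n ∈ relOrbit R p} := by
    intro a b hab
    simp only [Set.mem_setOf_eq, relOrbit_eq_of_rel hab]
  have hmA : m ∈ {p | n ∈ relOrbit R p} :=
    relOrbit_subset (O := {p | n ∈ relOrbit R p}) (mem_relOrbit_self R n) hA hm
  exact subset_antisymm (relOrbit_subset hmA (relClosed_relOrbit R m))
    (relOrbit_subset hm (relClosed_relOrbit R n))

lemma closedOrbits_insert_edge {R R' : ℕ → ℕ → Prop} {k c₀ : ℕ}
    (hR' : ∀ a b, R' a b ↔ R a b ∨ (a = k ∧ b = c₀))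
    (hdomk : ∀ b, ¬ R k b) (hrank : ∀ a, ¬ R a k) (hranc : ∀ a, ¬ R a c₀)
    (hkc : c₀ ≠ k) :
    relClosedOrbits R' = relClosedOrbits R := by
  have hRR' : ∀ a b, R a b → R' a b := fun a b h => (hR' a b).mpr (Or.inl h)
  have hkc₀ : R' k c₀ := (hR' k c₀).mpr (Or.inr ⟨rfl, rfl⟩)
  have hclosed_down : ∀ O : Set ℕ, RelClosed R' O → RelClosed R O :=
    fun O h a b hab => h a b (hRR' _ _ hab)
  have horb_mono : ∀ n, relOrbit R n ⊆ relOrbit R' n := by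
    intro n
    exact Set.sInter_subset_sInter (fun O hO => ⟨hO.1, hclosed_down O hO.2⟩)
  have hfact2 : ∀ O : Set ℕ, RelClosed R O → k ∉ O → c₀ ∉ O → RelClosed R' O := by
    intro O hO hk hcc a b hab
    rcases (hR' a b).mp hab with h | ⟨rfl, rfl⟩
    · exact hO a b h
    · exact iff_of_false hk hcc
  ext O
  simp only [relClosedOrbits, relOrbits, Set.mem_setOf_eq, Set.mem_sep_iff]
  constructor
  · rintro ⟨⟨n, rfl⟩, hcl⟩
    have hkO : k ∉ relOrbit R' n := by
      intro hk
      obtain ⟨a, ha⟩ := (hcl hk).2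
      rcases (hR' a k).mp ha with h | ⟨_, h⟩
      · exact hrank a h
      · exact hkc h.symm
    have hcO : c₀ ∉ relOrbit R' n := by
      intro hcc
      apply hkO
      rw [relOrbit_eq_of_mem hcc]
      exact (relClosed_relOrbit R' c₀ k c₀ hkc₀).mpr (mem_relOrbit_self R' c₀)
    have h1 : k ∉ relOrbit R n := fun h => hkO (horb_mono n h)
    have h2 : c₀ ∉ relOrbit R n := fun h => hcO (horb_mono n h)
    have heq : relOrbit R' n = relOrbit R n :=
      subset_antisymm
        (relOrbit_subset (mem_relOrbit_self R n) (hfact2 _ (relClosed_relOrbit R n) h1 h2))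
        (horb_mono n)
    refine ⟨⟨n, heq⟩, ?_⟩
    rw [heq] at hcl hkO hcO ⊢
    intro m hm
    obtain ⟨hd, hr⟩ := hcl hm
    obtain ⟨b, hb⟩ := hd
    obtain ⟨a, ha⟩ := hr
    constructor
    · rcases (hR' m b).mp hb with h | ⟨rfl, _⟩
      · exact ⟨b, h⟩
      · exact absurd hm hkO
    · rcases (hR' a m).mp ha with h | ⟨_, rfl⟩
      · exact ⟨a, h⟩
      · exact absurd hm hcO
  · rintro ⟨⟨n, rfl⟩, hcl⟩
    have h1 : k ∉ relOrbit R n := by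
      intro h
      obtain ⟨b, hb⟩ := (hcl h).1
      exact hdomk b hb
    have h2 : c₀ ∉ relOrbit R n := by
      intro h
      obtain ⟨a, ha⟩ := (hcl h).2
      exact hranc a ha
    have heq : relOrbit R' n = relOrbit R n :=
      subset_antisymm
        (relOrbit_subset (mem_relOrbit_self R n) (hfact2 _ (relClosed_relOrbit R n) h1 h2))
        (horb_mono n)
    refine ⟨⟨n, heq.symm⟩, ?_⟩
    intro m hm
    obtain ⟨hd, hr⟩ := hcl hm
    obtain ⟨b, hb⟩ := hd
    obtain ⟨a, ha⟩ := hr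
    exact ⟨⟨b, hRR' _ _ hb⟩, ⟨a, hRR' _ _ ha⟩⟩

end Aux15

namespace Aux15

open List

def okPair : Letter → Letter → Prop
  | Sum.inl _, Sum.inl _ => False
  | Sum.inr b, Sum.inr b' => b = b'
  | _, _ => True

@[simp] lemma okPair_inl_inl (g g' : Perm') : okPair (Sum.inl g) (Sum.inl g') ↔ False := Iff.rfl
@[simp] lemma okPair_inr_inr (b b' : Bool) : okPair (Sum.inr b) (Sum.inr b') ↔ b = b' := Iff.rfl
@[simp] lemma okPair_inl_inr (g : Perm') (b : Bool) : okPair (Sum.inl g) (Sum.inr b) := trivial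
@[simp] lemma okPair_inr_inl (g : Perm') (b : Bool) : okPair (Sum.inr b) (Sum.inl g) := trivial

lemma chain'_of_suffix {R : Letter → Letter → Prop} {w u : Word} (h : w.Chain' R)
    (hs : u <:+ w) : u.Chain' R := by
  obtain ⟨t, rfl⟩ := hs
  exact (List.isChain_append.mp h).2.1

lemma chain'_of_prefix {R : Letter → Letter → Prop} {w u : Word} (h : w.Chain' R)
    (hs : u <+: w) : u.Chain' R := by
  obtain ⟨t, rfl⟩ := hs
  exact (List.isChain_append.mp h).1

lemma chain'_replicate_okPair (n : ℕ) (b : Bool) :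
    Chain' okPair (List.replicate n (Sum.inr b : Letter)) := by
  induction n with
  | zero => exact List.isChain_nil
  | succ m ih =>
    rw [List.replicate_succ]
    cases m with
    | zero => exact List.isChain_singleton _
    | succ m' =>
      rw [List.replicate_succ]
      refine List.isChain_cons_cons.mpr ⟨rfl, ?_⟩
      rw [← List.replicate_succ]
      exact ih

lemma xpow_spec {z : ℤ} (hz : z ≠ 0) :
    ∃ (n : ℕ) (b : Bool), 0 < n ∧ xpow z = List.replicate n (Sum.inr b : Letter) := by
  unfold xpow
  by_cases h : 0 ≤ z
  · exact ⟨z.toNat, true, by omega, by rw [if_pos h]⟩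
  · exact ⟨(-z).toNat, false, by omega, by rw [if_neg h]⟩

lemma blockWord_spec {p : Perm' × ℤ} (hp : p.2 ≠ 0) :
    ∃ (n : ℕ) (b : Bool), 0 < n ∧
      blockWord p = Sum.inl p.1 :: List.replicate n (Sum.inr b : Letter) := by
  obtain ⟨n, b, hn, hx⟩ := xpow_spec hp
  exact ⟨n, b, hn, by rw [blockWord, hx]⟩

lemma chain'_blockWord {p : Perm' × ℤ} (hp : p.2 ≠ 0) : Chain' okPair (blockWord p) := by
  obtain ⟨n, b, hn, hb⟩ := blockWord_spec hp
  rw [hb]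
  cases n with
  | zero => omega
  | succ m =>
    rw [List.replicate_succ]
    exact List.isChain_cons_cons.mpr ⟨trivial, by rw [← List.replicate_succ]; exact chain'_replicate_okPair _ _⟩

lemma head?_flatten_blockWord (bs : List (Perm' × ℤ)) :
    bs = [] ∨ ∃ g : Perm', ((bs.map blockWord).flatten).head? = some (Sum.inl g) := by
  cases bs with
  | nil => exact Or.inl rfl
  | cons q bs' =>
    refine Or.inr ⟨q.1, ?_⟩
    simp [blockWord]

lemma chain'_flatten_blockWord (bs : List (Perm' × ℤ)) (hbs : ∀ p ∈ bs, p.2 ≠ 0) :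
    Chain' okPair ((bs.map blockWord).flatten) := by
  induction bs with
  | nil => exact List.isChain_nil
  | cons p bs' ih =>
    rw [List.map_cons, List.flatten_cons]
    refine List.isChain_append.mpr ⟨chain'_blockWord (hbs p (by simp)), ih (fun q hq => hbs q (by simp [hq])), ?_⟩
    intro x hx l hl
    rcases head?_flatten_blockWord bs' with h | ⟨g, hg⟩
    · rw [h] at hl; simp at hl
    · rw [hg] at hl
      obtain rfl : Sum.inl g = l := by simpa using hl
      obtain ⟨n, b, hn, hb⟩ := blockWord_spec (hbs p (by simp))
      cases n with
      | zero => omega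
      | succ m =>
        rw [hb, List.replicate_succ', ← List.cons_append, List.getLast?_concat] at hx
        obtain rfl : Sum.inr b = x := by simpa using hx
        trivial

end Aux15

namespace Aux15

open List

lemma isNice_chain {G : Subgroup Perm'} {w : Word} (h : IsNice G w) : Chain' okPair w := by
  rcases h with ⟨n, hn, rfl⟩ | ⟨bs, hbs, hprop, _, rfl⟩
  · obtain ⟨m, b, _, hx⟩ := xpow_spec (by exact_mod_cast hn.ne' : (n : ℤ) ≠ 0)
    rw [hx]
    exact chain'_replicate_okPair _ _
  · exact chain'_flatten_blockWord bs (fun p hp => (hprop p hp).2.2)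

lemma isNice_concat {G : Subgroup Perm'} {w : Word} (h : IsNice G w) :
    ∃ w₁, w = w₁ ++ [Sum.inr true] := by
  rcases h with ⟨n, hn, rfl⟩ | ⟨bs, hbs, hprop, ⟨p, hlast, hp2⟩, rfl⟩
  · refine ⟨List.replicate (n - 1) (Sum.inr true), ?_⟩
    rw [xpow]
    rw [if_pos (by exact_mod_cast Nat.zero_le n)]
    rw [← List.replicate_succ']
    congr 1
    omega
  · rcases List.eq_nil_or_concat bs with rfl | ⟨L, q, hq⟩
    · simp at hlast
    · have hq' : bs = L ++ [q] := by simpa using hq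
      rw [hq', List.getLast?_concat] at hlast
      obtain rfl : p = q := by simpa using hlast.symm
      subst hq'
      have hp2' : 0 < p.2 := hp2
      refine ⟨(L.map blockWord).flatten ++ Sum.inl p.1 :: List.replicate (p.2.toNat - 1) (Sum.inr true), ?_⟩
      rw [List.map_append, List.flatten_append]
      have h2 : p.2.toNat = (p.2.toNat - 1) + 1 := by omega
      simp only [List.map_cons, List.map_nil, List.flatten_cons, List.flatten_nil,
        List.append_nil, blockWord]
      rw [xpow, if_pos (le_of_lt hp2'), h2, List.replicate_succ']
      simp [List.append_assoc]

lemma isNice_letter {G : Subgroup Perm'} {w : Word} (h : IsNice G w) {g : Perm'}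
    (hg : Sum.inl g ∈ w) : g ∈ G ∧ g ≠ 1 := by
  rcases h with ⟨n, hn, rfl⟩ | ⟨bs, hbs, hprop, _, rfl⟩
  · obtain ⟨m, b, _, hx⟩ := xpow_spec (show (n:ℤ) ≠ 0 by exact_mod_cast hn.ne')
    rw [hx] at hg
    exact absurd (List.eq_of_mem_replicate hg) (by simp)
  · rw [List.mem_flatten] at hg
    obtain ⟨blk, hblk, hmem⟩ := hg
    rw [List.mem_map] at hblk
    obtain ⟨p, hp, rfl⟩ := hblk
    rw [blockWord] at hmem
    rcases List.mem_cons.mp hmem with heq | hmem'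
    · obtain rfl : g = p.1 := by injection heq
      exact ⟨(hprop p hp).1, (hprop p hp).2.1⟩
    · obtain ⟨m, b, _, hx⟩ := xpow_spec (hprop p hp).2.2
      rw [hx] at hmem'
      exact absurd (List.eq_of_mem_replicate hmem') (by simp)

lemma isNice_ne_nil {G : Subgroup Perm'} {w : Word} (h : IsNice G w) : w ≠ [] := by
  obtain ⟨w₁, rfl⟩ := isNice_concat h
  simp

lemma wpow_one (v : Word) : wpow v 1 = v := by simp [wpow]

lemma wpow_zero (v : Word) : wpow v 0 = [] := by simp [wpow]

end Aux15

namespace Aux15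

open List

lemma concat_ne {l l' : Letter} (hne : l ≠ l') {w w₁ : Word} (hw : w = w₁ ++ [l])
    (w₂ : Word) : w ≠ w₂ ++ [l'] := by
  intro h
  have h2 := (List.append_inj' (hw.symm.trans h) rfl).2
  simp only [List.cons.injEq, and_true] at h2
  exact hne h2

lemma kfree {s : Set (ℕ × ℕ)} {k : ℕ} {W : Word}
    (hch : W.Chain' okPair)
    (hk1 : k ∉ pdom s) (hk2 : k ∉ pran s)
    (hS2 : ∀ g : Perm', Sum.inl g ∈ W → g⁻¹ k ∉ pdom s ∧ g⁻¹ k ∉ pran s)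
    (a : ℕ)
    (hgl : ∀ (g : Perm') (w₂ : Word), W = w₂ ++ [Sum.inl g] → g a ≠ k) :
    ∀ u : Word, u ≠ [] → u <:+ W → ∀ b, wordRel s u a b →
      b ≠ k ∧ (∀ br : Bool, u.head? = some (Sum.inr br) → b ∈ pdom s ∪ pran s) := by
  intro u
  induction u with
  | nil => intro h; exact absurd rfl h
  | cons l u2 ih =>
    intro _ hsuf b hb
    obtain ⟨c, hc, hl⟩ := hb
    by_cases hu2 : u2 = []
    · subst hu2
      obtain rfl : a = c := hc
      cases l with
      | inl g =>
        obtain ⟨w₂, hw₂⟩ := hsuf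
        refine ⟨fun hbk => hgl g w₂ hw₂.symm (hbk ▸ hl), ?_⟩
        intro br hbr
        simp at hbr
      | inr br =>
        cases br with
        | false =>
          exact ⟨fun hbk => hk1 ⟨(b, a), hl, hbk ▸ rfl⟩,
            fun _ _ => Or.inl ⟨(b, a), hl, rfl⟩⟩
        | true =>
          exact ⟨fun hbk => hk2 ⟨(a, b), hl, hbk ▸ rfl⟩,
            fun _ _ => Or.inr ⟨(a, b), hl, rfl⟩⟩
    · have hsuf2 : u2 <:+ W := (List.suffix_cons l u2).trans hsuf
      obtain ⟨hck, hcD⟩ := ih hu2 hsuf2 c hc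
      cases l with
      | inl g =>
        obtain ⟨l₂, u₃, rfl⟩ : ∃ l₂ u₃, u2 = l₂ :: u₃ := by
          cases u2 with
          | nil => exact absurd rfl hu2
          | cons l₂ u₃ => exact ⟨l₂, u₃, rfl⟩
        have hok : okPair (Sum.inl g) l₂ :=
          (List.isChain_cons_cons.mp (chain'_of_suffix hch hsuf)).1
        cases l₂ with
        | inl g' => exact absurd hok (by simp)
        | inr br =>
          have hcD' : c ∈ pdom s ∪ pran s := hcD br rfl
          have hmem : Sum.inl g ∈ W := hsuf.subset List.mem_cons_self
          refine ⟨?_, fun br' hbr' => by simp at hbr'⟩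
          intro hbk
          have hc' : g⁻¹ k = c := by
            rw [← hbk, ← hl]; exact g.symm_apply_apply c
          rcases hcD' with h | h
          · exact (hS2 g hmem).1 (hc' ▸ h)
          · exact (hS2 g hmem).2 (hc' ▸ h)
      | inr br =>
        cases br with
        | false =>
          exact ⟨fun hbk => hk1 ⟨(b, c), hl, hbk ▸ rfl⟩,
            fun _ _ => Or.inl ⟨(b, c), hl, rfl⟩⟩
        | true =>
          exact ⟨fun hbk => hk2 ⟨(c, b), hl, hbk ▸ rfl⟩,
            fun _ _ => Or.inr ⟨(c, b), hl, rfl⟩⟩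

lemma m1 {s : Set (ℕ × ℕ)} {k y : ℕ} {W : Word}
    (hch : W.Chain' okPair)
    (hk1 : k ∉ pdom s) (hk2 : k ∉ pran s)
    (hS2 : ∀ g : Perm', Sum.inl g ∈ W → g⁻¹ k ∉ pdom s ∧ g⁻¹ k ∉ pran s)
    (a : ℕ) (hak : a ≠ k)
    (hgl : ∀ (g : Perm') (w₂ : Word), W = w₂ ++ [Sum.inl g] → g a ≠ k)
    (hay : ∀ u : Word, u ≠ [] → u <:+ W → ¬ wordRel s u a y)
    (hwl : ∀ w₂ : Word, W ≠ w₂ ++ [Sum.inr false]) :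
    ∀ u : Word, u <:+ W → ∀ b, wordRel (insert (k, y) s) u a b → wordRel s u a b := by
  intro u
  induction u with
  | nil => exact fun _ b hb => hb
  | cons l u2 ih =>
    intro hsuf b hb
    obtain ⟨c, hc, hl⟩ := hb
    have hsuf2 : u2 <:+ W := (List.suffix_cons l u2).trans hsuf
    have hc' : wordRel s u2 a c := ih hsuf2 c hc
    refine ⟨c, hc', ?_⟩
    by_cases hu2 : u2 = []
    · subst hu2
      obtain rfl : a = c := hc'
      cases l with
      | inl g => exact hl
      | inr br =>
        cases br with
        | true =>
          rcases Set.mem_insert_iff.mp hl with he | hm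
          · exact absurd (congrArg Prod.fst he) hak
          · exact hm
        | false =>
          rcases Set.mem_insert_iff.mp hl with he | hm
          · obtain ⟨w₂, hw₂⟩ := hsuf
            exact absurd hw₂.symm (hwl w₂)
          · exact hm
    · have hck : c ≠ k := (kfree hch hk1 hk2 hS2 a hgl u2 hu2 hsuf2 c hc').1
      have hcy : c ≠ y := fun h => hay u2 hu2 hsuf2 (h ▸ hc')
      cases l with
      | inl g => exact hl
      | inr br =>
        cases br with
        | true =>
          rcases Set.mem_insert_iff.mp hl with he | hm
          · exact absurd (congrArg Prod.fst he) hck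
          · exact hm
        | false =>
          rcases Set.mem_insert_iff.mp hl with he | hm
          · exact absurd (congrArg Prod.snd he) hcy
          · exact hm

lemma rel_char {s : Set (ℕ × ℕ)} {k y : ℕ} {w w₁ : Word}
    (hw : w = w₁ ++ [Sum.inr true])
    (hch : w.Chain' okPair)
    (hk1 : k ∉ pdom s) (hk2 : k ∉ pran s) (hyk : y ≠ k)
    (hS2 : ∀ g : Perm', Sum.inl g ∈ w → g⁻¹ k ∉ pdom s ∧ g⁻¹ k ∉ pran s)
    (hygl : ∀ g : Perm', Sum.inl g ∈ w → g y ≠ k)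
    (hay : ∀ u : Word, u ≠ [] → u <:+ w → ∀ a, ¬ wordRel s u a y)
    (hfix : ∀ u : Word, u ≠ [] → u <:+ w₁ → ¬ wordRel s u y y) :
    ∀ a b, wordRel (insert (k, y) s) w a b ↔
      (wordRel s w a b ∨ (a = k ∧ wordRel s w₁ y b)) := by
  have hch1 : w₁.Chain' okPair := chain'_of_prefix hch ⟨[Sum.inr true], hw.symm⟩
  have hS2' : ∀ g : Perm', Sum.inl g ∈ w₁ → g⁻¹ k ∉ pdom s ∧ g⁻¹ k ∉ pran s :=
    fun g hg => hS2 g (by rw [hw]; exact List.mem_append_left _ hg)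
  have hwl1 : ∀ w₂ : Word, w₁ ≠ w₂ ++ [Sum.inr false] := by
    intro w₂ hw₂
    have hchw : Chain' okPair ((w₂ ++ [Sum.inr false]) ++ [Sum.inr true]) := by
      rw [← hw₂, ← hw]; exact hch
    have h3 := (List.isChain_append.mp hchw).2.2 (Sum.inr false)
      (by rw [List.getLast?_concat]; rfl) (Sum.inr true) rfl
    simp at h3
  intro a b
  constructor
  · intro hb
    by_cases hak : a = k
    · right
      refine ⟨hak, ?_⟩
      rw [hak] at hb
      rw [hw, wordRel_append] at hb
      obtain ⟨c, h1, h2⟩ := hb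
      obtain ⟨d, hd, hdm⟩ := h1
      obtain rfl : (k : ℕ) = d := hd
      have hcy : c = y := by
        rcases Set.mem_insert_iff.mp hdm with he | hm
        · exact congrArg Prod.snd he
        · exact absurd ⟨(k, c), hm, rfl⟩ hk1
      rw [hcy] at h2
      exact m1 hch1 hk1 hk2 hS2' y hyk
        (fun g w₂ hw₂ => hygl g (by rw [hw, hw₂]; simp))
        hfix hwl1 w₁ (List.suffix_refl w₁) b h2
    · left
      rw [hw] at hb ⊢
      have hchw : Chain' okPair (w₁ ++ [Sum.inr true]) := by rw [← hw]; exact hch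
      refine m1 hchw hk1 hk2 (fun g hg => hS2 g (by rw [hw]; exact hg)) a hak
        (fun g w₂ hw₂ => absurd hw₂ (by
          have := concat_ne (l := Sum.inr true) (l' := Sum.inl g) (by simp) hw w₂
          rw [hw] at this
          exact this))
        (fun u hu hus => hay u hu (by rw [hw]; exact hus) a)
        (fun w₂ => by
          have := concat_ne (l := Sum.inr true) (l' := Sum.inr false) (by simp) hw w₂
          rw [hw] at this
          exact this)
        (w₁ ++ [Sum.inr true]) (List.suffix_refl _) b hb
  · rintro (h | ⟨hak, h⟩)
    · exact wordRel_mono (Set.subset_insert _ _) h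
    · rw [hak, hw, wordRel_append]
      exact ⟨y, ⟨k, rfl, Set.mem_insert _ _⟩, wordRel_mono (Set.subset_insert _ _) h⟩

end Aux15

namespace Aux15

open List

lemma word_pres {G : Subgroup Perm'} {s : Set (ℕ × ℕ)} (hs : PartInj s) {k y : ℕ} {w : Word}
    (hnw : IsNice G w)
    (hk1 : k ∉ pdom s) (hk2 : k ∉ pran s) (hyk : y ≠ k)
    (hS2 : ∀ g : Perm', Sum.inl g ∈ w → g⁻¹ k ∉ pdom s ∧ g⁻¹ k ∉ pran s)
    (hygl : ∀ g : Perm', Sum.inl g ∈ w → g y ≠ k)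
    (hay : ∀ u : Word, u ≠ [] → u <:+ w → ∀ a, ¬ wordRel s u a y)
    (hfix : ∀ u : Word, u ≠ [] → u <:+ w.dropLast → ¬ wordRel s u y y)
    (hys5 : ∀ c, wordRel s w.dropLast y c → ∀ a, ¬ wordRel s w a c) :
    wordFix (insert (k, y) s) w = wordFix s w ∧
      relClosedOrbits (wordRel (insert (k, y) s) w) = relClosedOrbits (wordRel s w) := by
  obtain ⟨w₁, hw⟩ := isNice_concat hnw
  have hdl : w.dropLast = w₁ := by rw [hw]; exact List.dropLast_concat
  rw [hdl] at hfix hys5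
  have hch := isNice_chain hnw
  have hch1 : w₁.Chain' okPair := chain'_of_prefix hch ⟨[Sum.inr true], hw.symm⟩
  have hS2' : ∀ g : Perm', Sum.inl g ∈ w₁ → g⁻¹ k ∉ pdom s ∧ g⁻¹ k ∉ pran s :=
    fun g hg => hS2 g (by rw [hw]; exact List.mem_append_left _ hg)
  have hrel := rel_char hw hch hk1 hk2 hyk hS2 hygl hay hfix
  have hdomk : ∀ b, ¬ wordRel s w k b := by
    intro b hb
    rw [hw, wordRel_append] at hb
    obtain ⟨c, ⟨d, hd, hdm⟩, -⟩ := hb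
    obtain rfl : (k : ℕ) = d := hd
    exact hk1 ⟨(k, c), hdm, rfl⟩
  have hglw : ∀ (g : Perm') (w₂ : Word), w = w₂ ++ [Sum.inl g] → ∀ a : ℕ, g a ≠ k := by
    intro g w₂ hw₂
    exact absurd hw₂ (concat_ne (by simp) hw w₂)
  have hrank : ∀ a, ¬ wordRel s w a k := by
    intro a hb
    exact (kfree hch hk1 hk2 hS2 a (fun g w₂ h => hglw g w₂ h a) w (isNice_ne_nil hnw)
      (List.suffix_refl w) k hb).1 rfl
  by_cases hex : ∃ c, wordRel s w₁ y c
  · obtain ⟨c₀, hc₀⟩ := hex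
    have hkc : c₀ ≠ k := by
      rcases eq_or_ne w₁ [] with rfl | hne
      · obtain rfl : y = c₀ := hc₀
        exact hyk
      · exact (kfree hch1 hk1 hk2 hS2' y
          (fun g w₂ hw₂ => hygl g (by rw [hw, hw₂]; simp)) w₁ hne
          (List.suffix_refl w₁) c₀ hc₀).1
    have hR' : ∀ a b, wordRel (insert (k, y) s) w a b ↔
        (wordRel s w a b ∨ (a = k ∧ b = c₀)) := by
      intro a b
      rw [hrel a b]
      constructor
      · rintro (h | ⟨hak, h⟩)
        · exact Or.inl h
        · exact Or.inr ⟨hak, wordRel_func hs h hc₀⟩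
      · rintro (h | ⟨hak, hbc⟩)
        · exact Or.inl h
        · exact Or.inr ⟨hak, hbc ▸ hc₀⟩
    constructor
    · ext n
      simp only [wordFix, Set.mem_setOf_eq, hR' n n]
      constructor
      · rintro (h | ⟨h1, h2⟩)
        · exact h
        · exact absurd (h1.symm.trans h2).symm hkc
      · exact Or.inl
    · exact closedOrbits_insert_edge hR' hdomk hrank (fun a ha => hys5 c₀ hc₀ a ha) hkc
  · have hR' : ∀ a b, wordRel (insert (k, y) s) w a b ↔ wordRel s w a b := by
      intro a b
      rw [hrel a b]
      constructor
      · rintro (h | ⟨hak, h⟩)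
        · exact h
        · exact absurd ⟨b, h⟩ hex
      · exact Or.inl
    have heq : wordRel (insert (k, y) s) w = wordRel s w :=
      funext fun a => funext fun b => propext (hR' a b)
    rw [wordFix, wordFix, heq]
    exact ⟨rfl, rfl⟩

end Aux15

namespace Aux15

open List

lemma prefix_getD {l l' : List ℕ} (h : l <+: l') {j : ℕ} (hj : j < l.length) :
    l'.getD j 0 = l.getD j 0 := by
  obtain ⟨r, rfl⟩ := h
  rw [List.getD_eq_getElem _ _ hj,
    List.getD_eq_getElem _ _ (by rw [List.length_append]; omega),
    List.getElem_append_left]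

lemma tree_long {G : Subgroup Perm'} {T : Set (List ℕ)} (hT : TreePos (G : Set Perm') T) :
    ∀ (n : ℕ) (t₀ : List ℕ), t₀ ∈ T → ∃ t₁ ∈ T, t₀ <+: t₁ ∧ n ≤ t₁.length := by
  intro n
  induction n with
  | zero => exact fun t₀ h => ⟨t₀, h, List.prefix_refl _, Nat.zero_le _⟩
  | succ n ih =>
    intro t₀ h
    obtain ⟨t₁, ht₁, hp, hlen⟩ := ih t₀ h
    obtain ⟨t₂, ht₂, hp2, kk, hk1, hk2, -⟩ :=
      hT.2 t₁ ht₁ ∅ (Set.empty_subset _) Set.finite_empty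
    exact ⟨t₂, ht₂, hp.trans hp2, by omega⟩

lemma tree_iter {G : Subgroup Perm'} {T : Set (List ℕ)} (hT : TreePos (G : Set Perm') T)
    (P₀ : Set Perm') (hP₀G : P₀ ⊆ (G : Set Perm')) (hP₀fin : P₀.Finite) :
    ∀ (n : ℕ) (t₀ : List ℕ), t₀ ∈ T → ∃ t' ∈ T, t₀ <+: t' ∧ ∃ f : Fin n → ℕ,
      StrictMono f ∧ ∀ i, t₀.length ≤ f i ∧ f i < t'.length ∧
        ∀ g ∈ P₀, t'.getD (f i) 0 ≠ g (f i) := by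
  intro n
  induction n with
  | zero =>
    exact fun t₀ h => ⟨t₀, h, List.prefix_refl _, Fin.elim0, fun i => i.elim0, fun i => i.elim0⟩
  | succ n ih =>
    intro t₀ ht₀
    obtain ⟨t₁, ht₁, hp, f, hmono, hprop⟩ := ih t₀ ht₀
    obtain ⟨t₂, ht₂, hp2, kk, hk1, hk2, hk3⟩ := hT.2 t₁ ht₁ P₀ hP₀G hP₀fin
    refine ⟨t₂, ht₂, hp.trans hp2, fun i => if h : (i : ℕ) < n then f ⟨i, h⟩ else kk, ?_, ?_⟩
    · intro i j hij
      have hij' : (i : ℕ) < (j : ℕ) := hij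
      dsimp only
      by_cases hi : (i : ℕ) < n <;> by_cases hj : (j : ℕ) < n
      · rw [dif_pos hi, dif_pos hj]
        exact hmono (show (⟨(i : ℕ), hi⟩ : Fin n) < ⟨(j : ℕ), hj⟩ from hij')
      · rw [dif_pos hi, dif_neg hj]
        exact lt_of_lt_of_le (hprop ⟨(i : ℕ), hi⟩).2.1 hk1
      · exfalso; omega
      · exfalso; omega
    · intro i
      dsimp only
      by_cases hi : (i : ℕ) < n
      · rw [dif_pos hi]
        obtain ⟨h1, h2, h3⟩ := hprop ⟨(i : ℕ), hi⟩
        refine ⟨h1, lt_of_lt_of_le h2 hp2.length_le, fun g hg => ?_⟩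
        rw [prefix_getD hp2 h2]
        exact h3 g hg
      · rw [dif_neg hi]
        exact ⟨le_trans hp.length_le hk1, hk2, fun g hg => hk3 g hg⟩

lemma suffix_mem_inr {G : Subgroup Perm'} {w u : Word} (hnw : IsNice G w) (hu : u ≠ [])
    (hus : u <:+ w) : Sum.inr true ∈ u := by
  obtain ⟨w₁, hw⟩ := isNice_concat hnw
  obtain ⟨tt, htt⟩ := hus
  rcases List.eq_nil_or_concat u with rfl | ⟨L, b, hL⟩
  · exact absurd rfl hu
  · have hL' : u = L ++ [b] := by simpa using hL
    subst hL'
    have heq : (tt ++ L) ++ [b] = w₁ ++ [Sum.inr true] := by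
      rw [List.append_assoc]; rw [htt, hw]
    have h2 := (List.append_inj' heq rfl).2
    simp only [List.cons.injEq, and_true] at h2
    simp [h2]

lemma fixSet_finite {G : Subgroup Perm'} (hG : Cofinitary G) {s : Set (ℕ × ℕ)}
    (hsfin : s.Finite) {w u : Word} (hnw : IsNice G w) (hu : u ≠ [])
    (hus : u <:+ w.dropLast) : {a | wordRel s u a a}.Finite := by
  rcases Classical.em (∃ br : Bool, (Sum.inr br : Letter) ∈ u) with hinr | hinr
  · exact (relRan_wordRel_finite hsfin u hinr).subset (fun a ha => ⟨a, ha⟩)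
  · obtain ⟨w₁, hw⟩ := isNice_concat hnw
    have hdl : w.dropLast = w₁ := by rw [hw]; exact List.dropLast_concat
    rw [hdl] at hus
    obtain ⟨l, u₂, rfl⟩ : ∃ l u₂, u = l :: u₂ := by
      cases u with
      | nil => exact absurd rfl hu
      | cons l u₂ => exact ⟨l, u₂, rfl⟩
    cases l with
    | inr br => exact absurd ⟨br, List.mem_cons_self⟩ hinr
    | inl g =>
      obtain rfl : u₂ = [] := by
        cases u₂ with
        | nil => rfl
        | cons l₂ u₃ =>
          have hch1 : w₁.Chain' okPair :=
            chain'_of_prefix (isNice_chain hnw) ⟨[Sum.inr true], hw.symm⟩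
          have hok := (List.isChain_cons_cons.mp (chain'_of_suffix hch1 hus)).1
          cases l₂ with
          | inl g' => exact absurd hok (by simp)
          | inr br => exact absurd ⟨br, by simp⟩ hinr
      have hmm : Sum.inl g ∈ w := by
        have h1 : Sum.inl g ∈ w₁ := hus.subset (by simp)
        rw [hw]; exact List.mem_append_left _ h1
      obtain ⟨hgG, hg1⟩ := isNice_letter hnw hmm
      refine (hG g hgG hg1).subset ?_
      rintro a ⟨c, hc, hl⟩
      obtain rfl : a = c := hc
      exact hl

end Aux15

open Aux15 in
/-- The generic hitting lemma for the coding forcing `Z†_G(r)`. -/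
theorem statement15 (G : Subgroup Perm') (hG : Cofinitary G) (r : ℕ → Fin 2)
    (T : Set (List ℕ)) (hT : TreePos (G : Set Perm') T)
    (t : List ℕ) (ht : t ∈ T)
    (s : Set (ℕ × ℕ)) (E : Set Word) (hc : ZdagCond G r s E) :
    ∃ s' : Set (ℕ × ℕ), ZdagCond G r s' E ∧ ZLe s' E s E ∧
      ∃ t' ∈ T, t <+: t' ∧
        ∃ k : ℕ, t.length ≤ k ∧ k < t'.length ∧ (k, t'.getD k 0) ∈ s' := by
  classical
  obtain ⟨⟨hsfin, hsinj, hEfin, hnice⟩, hcycl, hdag⟩ := hc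
  -- the permutation letters occurring in E
  set Γ : Set Perm' := {g | ∃ w ∈ E, Sum.inl g ∈ w} with hΓdef
  have hΓfin : Γ.Finite := by
    have hsub : Γ ⊆ ⋃ w ∈ E, {g : Perm' | Sum.inl g ∈ w} := by
      rintro g ⟨w, hw, hgw⟩
      exact Set.mem_biUnion hw hgw
    refine (Set.Finite.biUnion hEfin fun w _ => ?_).subset hsub
    have h2 : {g : Perm' | Sum.inl g ∈ w} ⊆ Sum.inl ⁻¹' {l | l ∈ w} := fun g h => h
    exact (w.finite_toSet.preimage (Function.Injective.injOn Sum.inl_injective)).subset h2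
  have hΓG : ∀ g ∈ Γ, g ∈ G ∧ g ≠ 1 := by
    rintro g ⟨w, hw, hgw⟩
    exact isNice_letter (hnice w hw) hgw
  -- the finite family of permutations for the tree condition
  set P₀ : Set Perm' := insert 1 (Γ ∪ (fun g : Perm' => g⁻¹) '' Γ) with hP₀def
  have hP₀G : P₀ ⊆ (G : Set Perm') := by
    rintro g hg
    rcases Set.mem_insert_iff.mp hg with rfl | hg2
    · exact G.one_mem
    · rcases hg2 with hg3 | ⟨g', hg', rfl⟩
      · exact (hΓG g hg3).1
      · exact G.inv_mem (hΓG g' hg').1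
  have hP₀fin : P₀.Finite := ((hΓfin.union (hΓfin.image _))).insert 1
  -- bound for k
  have hDfin : (pdom s ∪ pran s).Finite := (pdom_finite hsfin).union (pran_finite hsfin)
  set Kbad : Set ℕ := (pdom s ∪ pran s) ∪ ⋃ g ∈ Γ, (fun m => g m) '' (pdom s ∪ pran s)
    with hKbdef
  have hKfin : Kbad.Finite := hDfin.union (Set.Finite.biUnion hΓfin fun g _ => hDfin.image _)
  obtain ⟨N, hN⟩ : ∃ N, ∀ x ∈ Kbad, x ≤ N := by
    obtain ⟨N, hN⟩ := hKfin.bddAbove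
    exact ⟨N, fun x hx => hN hx⟩
  -- bad values for y
  set Bad : Set ℕ := pran s ∪
      ((⋃ w ∈ E, ⋃ u ∈ {u : Word | u ∈ w.tails ∧ u ≠ []}, relRan (wordRel s u)) ∪
       ((⋃ w ∈ E, ⋃ u ∈ {u : Word | u ∈ w.dropLast.tails ∧ u ≠ []}, {a | wordRel s u a a}) ∪
        (⋃ w ∈ E, {d | ∃ c, wordRel s w.dropLast d c ∧ c ∈ relRan (wordRel s w)}))) with hBdef
  have hBfin : Bad.Finite := by
    refine (pran_finite hsfin).union (Set.Finite.union ?_ (Set.Finite.union ?_ ?_))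
    · refine Set.Finite.biUnion hEfin fun w hw => ?_
      refine Set.Finite.biUnion (w.tails.finite_toSet.subset (fun u hu => hu.1)) ?_
      rintro u ⟨hu1, hu2⟩
      exact relRan_wordRel_finite hsfin u
        ⟨true, suffix_mem_inr (hnice w hw) hu2 ((List.mem_tails u w).mp hu1)⟩
    · refine Set.Finite.biUnion hEfin fun w hw => ?_
      refine Set.Finite.biUnion (w.dropLast.tails.finite_toSet.subset (fun u hu => hu.1)) ?_
      rintro u ⟨hu1, hu2⟩
      exact fixSet_finite hG hsfin (hnice w hw) hu2 ((List.mem_tails u w.dropLast).mp hu1)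
    · refine Set.Finite.biUnion hEfin fun w hw => ?_
      refine preimage_wordRel_finite hsinj w.dropLast ?_
      refine relRan_wordRel_finite hsfin w
        ⟨true, suffix_mem_inr (hnice w hw) (isNice_ne_nil (hnice w hw)) (List.suffix_refl w)⟩
  -- a long node of the tree above t
  obtain ⟨t₀, ht₀T, htp₀, ht₀len⟩ := tree_long hT (N + 1) t ht
  -- iterate the tree property
  obtain ⟨t', ht'T, hp', f, hmono, hprop⟩ :=
    tree_iter hT P₀ hP₀G hP₀fin (hBfin.toFinset.card + 1) t₀ ht₀T
  have hnd : t'.Nodup := hT.1.2.2 t' ht'T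
  have hvinj : Function.Injective (fun i : Fin (hBfin.toFinset.card + 1) => t'.getD (f i) 0) := by
    intro i j hij
    simp only at hij
    have hi := (hprop i).2.1
    have hj := (hprop j).2.1
    rw [List.getD_eq_getElem _ _ hi, List.getD_eq_getElem _ _ hj] at hij
    exact hmono.injective (hnd.getElem_inj_iff.mp hij)
  obtain ⟨i, hyBad⟩ : ∃ i : Fin (hBfin.toFinset.card + 1), t'.getD (f i) 0 ∉ Bad := by
    by_contra hcon
    push_neg at hcon
    have hsub : Finset.univ.image (fun i : Fin (hBfin.toFinset.card + 1) => t'.getD (f i) 0)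
        ⊆ hBfin.toFinset := by
      intro v hv
      obtain ⟨i2, -, rfl⟩ := Finset.mem_image.mp hv
      exact hBfin.mem_toFinset.mpr (hcon i2)
    have hcard := Finset.card_le_card hsub
    rw [Finset.card_image_of_injective _ hvinj, Finset.card_univ, Fintype.card_fin] at hcard
    omega
  set kk : ℕ := f i with hkkdef
  set yv : ℕ := t'.getD kk 0 with hyvdef
  -- facts about kk
  have hkt₀ : t₀.length ≤ kk := (hprop i).1
  have hkKbad : kk ∉ Kbad := by
    intro h
    have := hN kk h
    omega
  have hkdom : kk ∉ pdom s := fun h => hkKbad (Or.inl (Or.inl h))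
  have hkran : kk ∉ pran s := fun h => hkKbad (Or.inl (Or.inr h))
  have hyP : ∀ g ∈ P₀, yv ≠ g kk := fun g hg => (hprop i).2.2 g hg
  have hyk : yv ≠ kk := by
    have := hyP 1 (Set.mem_insert _ _)
    simpa using this
  have hyran : yv ∉ pran s := fun h => hyBad (Or.inl h)
  -- conditions for word_pres
  have hS2 : ∀ w ∈ E, ∀ g : Perm', Sum.inl g ∈ w →
      g⁻¹ kk ∉ pdom s ∧ g⁻¹ kk ∉ pran s := by
    intro w hw g hgw
    have hgΓ : g ∈ Γ := ⟨w, hw, hgw⟩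
    constructor <;> intro h <;>
      exact hkKbad (Or.inr (Set.mem_biUnion hgΓ
        ⟨g⁻¹ kk, by first | exact Or.inl h | exact Or.inr h, g.apply_symm_apply kk⟩))
  have hygl : ∀ w ∈ E, ∀ g : Perm', Sum.inl g ∈ w → g yv ≠ kk := by
    intro w hw g hgw heq
    have hginv : g⁻¹ ∈ P₀ :=
      Set.mem_insert_iff.mpr (Or.inr (Or.inr ⟨g, ⟨w, hw, hgw⟩, rfl⟩))
    exact hyP g⁻¹ hginv (by rw [← heq]; exact (g.symm_apply_apply yv).symm)
  have hay : ∀ w ∈ E, ∀ u : Word, u ≠ [] → u <:+ w → ∀ a, ¬ wordRel s u a yv := by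
    intro w hw u hu hus a hrel
    refine hyBad (Or.inr (Or.inl ?_))
    exact Set.mem_biUnion hw
      (Set.mem_biUnion (show u ∈ {u : Word | u ∈ w.tails ∧ u ≠ []} from
        ⟨(List.mem_tails u w).mpr hus, hu⟩) ⟨a, hrel⟩)
  have hfixc : ∀ w ∈ E, ∀ u : Word, u ≠ [] → u <:+ w.dropLast → ¬ wordRel s u yv yv := by
    intro w hw u hu hus hrel
    refine hyBad (Or.inr (Or.inr (Or.inl ?_)))
    exact Set.mem_biUnion hw
      (Set.mem_biUnion (show u ∈ {u : Word | u ∈ w.dropLast.tails ∧ u ≠ []} from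
        ⟨(List.mem_tails u w.dropLast).mpr hus, hu⟩) hrel)
  have hys5 : ∀ w ∈ E, ∀ c, wordRel s w.dropLast yv c → ∀ a, ¬ wordRel s w a c := by
    intro w hw c hrel a hrel2
    refine hyBad (Or.inr (Or.inr (Or.inr ?_)))
    exact Set.mem_biUnion hw ⟨c, hrel, a, hrel2⟩
  -- the new condition
  have hpart : PartInj (insert (kk, yv) s) := by
    constructor
    · rintro a b c h1 h2
      rcases Set.mem_insert_iff.mp h1 with he1 | hm1 <;>
        rcases Set.mem_insert_iff.mp h2 with he2 | hm2
      · obtain ⟨-, hb⟩ := Prod.ext_iff.mp he1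
        obtain ⟨-, hcc⟩ := Prod.ext_iff.mp he2
        exact hb.trans hcc.symm
      · obtain ⟨ha, -⟩ := Prod.ext_iff.mp he1
        exact absurd ⟨(a, c), hm2, ha⟩ hkdom
      · obtain ⟨ha, -⟩ := Prod.ext_iff.mp he2
        exact absurd ⟨(a, b), hm1, ha⟩ hkdom
      · exact hsinj.1 hm1 hm2
    · rintro a b c h1 h2
      rcases Set.mem_insert_iff.mp h1 with he1 | hm1 <;>
        rcases Set.mem_insert_iff.mp h2 with he2 | hm2
      · obtain ⟨ha, -⟩ := Prod.ext_iff.mp he1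
        obtain ⟨hb, -⟩ := Prod.ext_iff.mp he2
        exact ha.trans hb.symm
      · obtain ⟨-, hcc⟩ := Prod.ext_iff.mp he1
        exact absurd ⟨(b, c), hm2, hcc⟩ hyran
      · obtain ⟨-, hcc⟩ := Prod.ext_iff.mp he2
        exact absurd ⟨(a, c), hm1, hcc⟩ hyran
      · exact hsinj.2 hm1 hm2
  have hword : ∀ w ∈ E, wordFix (insert (kk, yv) s) w = wordFix s w ∧
      relClosedOrbits (wordRel (insert (kk, yv) s) w) = relClosedOrbits (wordRel s w) :=
    fun w hw => word_pres hsinj (hnice w hw) hkdom hkran hyk (hS2 w hw) (hygl w hw)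
      (hay w hw) (hfixc w hw) (hys5 w hw)
  refine ⟨insert (kk, yv) s,
    ⟨⟨hsfin.insert _, hpart, hEfin, hnice⟩, hcycl, ?_⟩,
    ⟨Set.subset_insert _ _, subset_rfl, fun w hw => (hword w hw).1⟩,
    t', ht'T, htp₀.trans hp', kk, ?_, ?_, ?_⟩
  · -- the coding clause
    intro w hw v kv hind heqv
    obtain ⟨h1, h2⟩ := hdag w hw v kv hind heqv
    refine ⟨h1, fun n hn i2 hi2 => ?_⟩
    have hkv1 : 1 ≤ kv := by
      by_contra hcon
      have hkv0 : kv = 0 := by omega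
      subst hkv0
      rw [wpow_zero] at heqv
      exact isNice_ne_nil (hnice w hw) heqv
    have hvE : v ∈ E := by
      have := h1 1 one_pos hkv1
      rwa [wpow_one] at this
    have hodag : odag (wordRel (insert (kk, yv) s) v) i2 = odag (wordRel s v) i2 := by
      unfold odag
      rw [(hword v hvE).2]
    rw [hodag]
    exact h2 n hn i2 hi2
  · exact le_trans htp₀.length_le hkt₀
  · exact (hprop i).2.1
  · exact Set.mem_insert _ _

end
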